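/- Assume k := 2 f''(1) + 6 f'(1) ≠ 0. Let 0 < c₀ < c_s and let ξ : (c₀, c_s) → (0,1) satisfy N_c(ξ(c)) = 0 for every c ∈ (c₀, c_s) and ξ(c) → 0 as c → c_s⁻. Then ξ(c)/(c_s² − c²) → −3/k as c → c_s⁻. -/

import Mathlib

open Real MeasureTheory Filter Topology

/-- Auxiliary: if `G`, its derivative `G1`, and second derivative `G2` all vanish at `0`,
and `G2` has derivative `L` at `0`, then `G x / x ^ 3 → L / 6` as `x → 0⁺`. -/
lemma aux_cube (G G1 G2 : ℝ → ℝ) (L : ℝ) (S : Set ℝ) (hS : S ∈ 𝓝 (0:ℝ))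
    (hGd : ∀ x ∈ S, HasDerivAt G (G1 x) x)
    (hG1d : ∀ x ∈ S, HasDerivAt G1 (G2 x) x)
    (hG2d : HasDerivAt G2 L 0)
    (hG0 : G 0 = 0) (hG10 : G1 0 = 0) (hG20 : G2 0 = 0) :
    Tendsto (fun x => G x / x ^ 3) (𝓝[>] (0:ℝ)) (𝓝 (L / 6)) := by
  have hS' : S ∈ 𝓝[>] (0:ℝ) := mem_nhdsWithin_of_mem_nhds hS
  have h0S : (0:ℝ) ∈ S := mem_of_mem_nhds hS
  have hpos : ∀ᶠ x in 𝓝[>] (0:ℝ), (0:ℝ) < x := self_mem_nhdsWithin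
  -- third step : `G2 x / (6 x) → L / 6`
  have h3 : Tendsto (fun x => G2 x / (6 * x)) (𝓝[>] (0:ℝ)) (𝓝 (L / 6)) := by
    have hslope : Tendsto (slope G2 0) (𝓝[≠] (0:ℝ)) (𝓝 L) :=
      hasDerivAt_iff_tendsto_slope.mp hG2d
    have hslope' : Tendsto (slope G2 0) (𝓝[>] (0:ℝ)) (𝓝 L) :=
      hslope.mono_left (nhdsWithin_mono 0 (fun x hx => ne_of_gt hx))
    refine Tendsto.congr' ?_ (hslope'.div_const 6)
    filter_upwards [hpos] with x hx
    rw [slope_def_field, hG20, sub_zero, sub_zero, div_div, mul_comm]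
  -- second step : `G1 x / (3 x ^ 2) → L / 6`
  have h2 : Tendsto (fun x => G1 x / (3 * x ^ 2)) (𝓝[>] (0:ℝ)) (𝓝 (L / 6)) := by
    apply HasDerivAt.lhopital_zero_nhdsGT (f' := G2) (g' := fun x => 6 * x)
    · filter_upwards [hS'] with x hx using hG1d x hx
    · refine Eventually.of_forall fun x => ?_
      have : HasDerivAt (fun y : ℝ => 3 * y ^ 2) (3 * (↑(2:ℕ) * x ^ (2 - 1))) x :=
        (hasDerivAt_pow 2 x).const_mul 3
      convert this using 1
      norm_num; ring
    · filter_upwards [hpos] with x hx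
      exact (by positivity : (0:ℝ) < 6 * x).ne'
    · have := ((hG1d 0 h0S).continuousAt).tendsto
      rw [hG10] at this
      exact this.mono_left nhdsWithin_le_nhds
    · have : Tendsto (fun x : ℝ => 3 * x ^ 2) (𝓝 0) (𝓝 (3 * 0 ^ 2)) :=
        (by continuity : Continuous (fun x : ℝ => 3 * x ^ 2)).tendsto 0
      norm_num at this
      exact this.mono_left nhdsWithin_le_nhds
    · exact h3
  -- first step : `G x / x ^ 3 → L / 6`
  apply HasDerivAt.lhopital_zero_nhdsGT (f' := G1) (g' := fun x => 3 * x ^ 2)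
  · filter_upwards [hS'] with x hx using hGd x hx
  · refine Eventually.of_forall fun x => ?_
    simpa using hasDerivAt_pow 3 x
  · filter_upwards [hpos] with x hx
    exact (by positivity : (0:ℝ) < 3 * x ^ 2).ne'
  · have := ((hGd 0 h0S).continuousAt).tendsto
    rw [hG0] at this
    exact this.mono_left nhdsWithin_le_nhds
  · have : Tendsto (fun x : ℝ => x ^ 3) (𝓝 0) (𝓝 (0 ^ 3)) :=
      (continuous_pow 3).tendsto 0
    norm_num at this
    exact this.mono_left nhdsWithin_le_nhds
  · exact h2

/-- Asymptotics of the first zero of `N_c`: `ξ(c)/(c_s² - c²) → -3/k` as `c → c_s⁻`. -/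
theorem stmt_5 (f : ℝ → ℝ) (U : Set ℝ) (hU : IsOpen U) (hUIcc : Set.Icc (0:ℝ) 1 ⊆ U)
    (hf : ContDiffOn ℝ 3 f U) (hf1 : f 1 = 0) (hf'1 : deriv f 1 < 0)
    (cs k : ℝ) (hcs : cs = Real.sqrt (-(2 * deriv f 1)))
    (hk : k = 2 * deriv (deriv f) 1 + 6 * deriv f 1) (hk0 : k ≠ 0)
    (F : ℝ → ℝ) (hF : ∀ r, F r = ∫ ρ in r..1, f ρ)
    (c₀ : ℝ) (hc₀ : 0 < c₀) (hc₀cs : c₀ < cs)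
    (ξ : ℝ → ℝ)
    (hξmem : ∀ c ∈ Set.Ioo c₀ cs, ξ c ∈ Set.Ioo (0:ℝ) 1)
    (hzero : ∀ c ∈ Set.Ioo c₀ cs,
      c ^ 2 * (ξ c) ^ 2 - 4 * (1 - ξ c) * F (1 - ξ c) = 0)
    (hξ0 : Tendsto ξ (𝓝[<] cs) (𝓝 0)) :
    Tendsto (fun c => ξ c / (cs ^ 2 - c ^ 2)) (𝓝[<] cs) (𝓝 (-3 / k)) := by
  have hcontU : ContinuousOn f U := hf.continuousOn
  have hcs2 : cs ^ 2 = -(2 * deriv f 1) := by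
    rw [hcs]; exact Real.sq_sqrt (by linarith)
  have hcspos : 0 < cs := lt_trans hc₀ hc₀cs
  -- a closed interval around 1 inside U
  obtain ⟨δ, hδ, hball⟩ : ∃ δ > 0, Set.Ioo (1-δ) (1+δ) ⊆ U := by
    obtain ⟨δ, hδ, h⟩ := Metric.mem_nhds_iff.mp
      (hU.mem_nhds (hUIcc ⟨zero_le_one, le_refl 1⟩))
    exact ⟨δ, hδ, by rw [← Real.ball_eq_Ioo]; exact h⟩
  set ε := δ / 2 with hεdef
  have hεpos : 0 < ε := by positivity
  have hIccU : Set.Icc (1-ε) (1+ε) ⊆ U := by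
    intro y hy
    exact hball ⟨by simp only [hεdef] at hy ⊢; linarith [hy.1], by
      simp only [hεdef] at hy ⊢; linarith [hy.2]⟩
  -- derivative of F near 1
  have Fdef : F = fun u => ∫ ρ in u..1, f ρ := funext hF
  have hF1 : F 1 = 0 := by rw [Fdef]; simp
  have hFd : ∀ r ∈ Set.Icc (1-ε) (1+ε), HasDerivAt F (-f r) r := by
    intro r hr
    have hsub : Set.uIcc r 1 ⊆ U :=
      fun y hy => hIccU (Set.uIcc_subset_Icc hr ⟨by linarith, by linarith⟩ hy)
    have hint : IntervalIntegrable f volume r 1 := (hcontU.mono hsub).intervalIntegrable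
    have hmeas : StronglyMeasurableAtFilter f (𝓝 r) :=
      hcontU.stronglyMeasurableAtFilter hU r (hIccU hr)
    have hca : ContinuousAt f r := hcontU.continuousAt (hU.mem_nhds (hIccU hr))
    rw [Fdef]
    exact intervalIntegral.integral_hasDerivAt_left hint hmeas hca
  -- differentiability of f and deriv f on U
  have hdf : ∀ y ∈ U, HasDerivAt f (deriv f y) y := fun y hy =>
    ((hf.differentiableOn (by norm_num)).differentiableAt (hU.mem_nhds hy)).hasDerivAt
  have hf' : ContDiffOn ℝ 2 (deriv f) U :=
    hf.deriv_of_isOpen hU (by norm_num)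
  have hdf' : ∀ y ∈ U, HasDerivAt (deriv f) (deriv (deriv f) y) y := fun y hy =>
    ((hf'.differentiableOn (by norm_num)).differentiableAt (hU.mem_nhds hy)).hasDerivAt
  -- the functions G, G1, G2
  set S : Set ℝ := Set.Ioo (-ε) ε with hSdef
  have hSnhds : S ∈ 𝓝 (0:ℝ) := Ioo_mem_nhds (by linarith) hεpos
  have hmemIcc : ∀ x ∈ S, (1 - x) ∈ Set.Icc (1-ε) (1+ε) := by
    intro x hx
    exact ⟨by linarith [hx.2], by linarith [hx.1]⟩
  have hmemU : ∀ x ∈ S, (1 - x) ∈ U := fun x hx => hIccU (hmemIcc x hx)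
  set G : ℝ → ℝ := fun x => cs^2 * x^2 - 4 * ((1-x) * F (1-x)) with hGdef
  set G1 : ℝ → ℝ := fun x => 2 * cs^2 * x - 4 * ((1-x) * f (1-x) - F (1-x)) with hG1def
  set G2 : ℝ → ℝ := fun x => 2 * cs^2 + 8 * f (1-x) + 4 * ((1-x) * deriv f (1-x))
    with hG2def
  have hm : ∀ x : ℝ, HasDerivAt (fun y : ℝ => 1 - y) (-1) x := fun x =>
    (hasDerivAt_id x).const_sub 1
  have hFc : ∀ x ∈ S, HasDerivAt (fun y => F (1-y)) (f (1-x)) x := by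
    intro x hx
    have := (hFd (1-x) (hmemIcc x hx)).comp x (hm x)
    simp at this; exact this
  have hfc : ∀ x ∈ S, HasDerivAt (fun y => f (1-y)) (-(deriv f (1-x))) x := by
    intro x hx
    have := (hdf (1-x) (hmemU x hx)).comp x (hm x)
    simp at this; exact this
  have hf'c : ∀ x ∈ S, HasDerivAt (fun y => deriv f (1-y)) (-(deriv (deriv f) (1-x))) x := by
    intro x hx
    have := (hdf' (1-x) (hmemU x hx)).comp x (hm x)
    simp at this; exact this
  have hGd : ∀ x ∈ S, HasDerivAt G (G1 x) x := by
    intro x hx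
    have h1 : HasDerivAt (fun y : ℝ => cs^2 * y^2) (cs^2 * (↑(2:ℕ) * x ^ (2-1))) x :=
      (hasDerivAt_pow 2 x).const_mul (cs^2)
    have h2 : HasDerivAt (fun y => (1-y) * F (1-y))
        (-1 * F (1-x) + (1-x) * f (1-x)) x := (hm x).mul (hFc x hx)
    have := h1.sub (h2.const_mul 4)
    refine this.congr_deriv ?_
    simp [hG1def]; ring
  have hG1d : ∀ x ∈ S, HasDerivAt G1 (G2 x) x := by
    intro x hx
    have h1 : HasDerivAt (fun y : ℝ => 2 * cs^2 * y) (2 * cs^2) x := by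
      simpa using (hasDerivAt_id x).const_mul (2 * cs^2)
    have h2 : HasDerivAt (fun y => (1-y) * f (1-y))
        (-1 * f (1-x) + (1-x) * (-(deriv f (1-x)))) x := (hm x).mul (hfc x hx)
    have h3 := h1.sub (((h2.sub (hFc x hx))).const_mul 4)
    refine h3.congr_deriv ?_
    simp [hG2def]; ring
  have h0S : (0:ℝ) ∈ S := ⟨by linarith, hεpos⟩
  have hG2d : HasDerivAt G2 (-2 * k) 0 := by
    have h2 : HasDerivAt (fun y => (1-y) * deriv f (1-y))
        (-1 * deriv f (1-(0:ℝ)) + (1-(0:ℝ)) * (-(deriv (deriv f) (1-(0:ℝ))))) 0 :=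
      (hm 0).mul (hf'c 0 h0S)
    have h3 := (((hfc 0 h0S).const_mul 8).add (h2.const_mul 4)).const_add (2 * cs^2)
    refine (h3.congr_deriv ?_).congr_of_eventuallyEq (Eventually.of_forall fun x => ?_)
    · rw [hk]; norm_num; ring
    · simp only [hG2def, Pi.add_apply]; ring
  have hG0 : G 0 = 0 := by simp [hGdef, hF1]
  have hG10 : G1 0 = 0 := by simp [hG1def, hF1, hf1]
  have hG20 : G2 0 = 0 := by
    simp only [hG2def, sub_zero, one_mul, hf1]
    rw [hcs2]; ring
  -- the key limit
  have hG : Tendsto (fun x => G x / x ^ 3) (𝓝[>] (0:ℝ)) (𝓝 (-2 * k / 6)) :=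
    aux_cube G G1 G2 (-2 * k) S hSnhds hGd hG1d hG2d hG0 hG10 hG20
  -- transfer to ξ
  have hmemIoo : Set.Ioo c₀ cs ∈ 𝓝[<] cs :=
    Ioo_mem_nhdsLT hc₀cs
  have hξto : Tendsto ξ (𝓝[<] cs) (𝓝[>] (0:ℝ)) := by
    rw [tendsto_nhdsWithin_iff]
    refine ⟨hξ0, ?_⟩
    filter_upwards [hmemIoo] with c hc
    exact (hξmem c hc).1
  have hcomp : Tendsto (fun c => G (ξ c) / (ξ c) ^ 3) (𝓝[<] cs) (𝓝 (-2 * k / 6)) :=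
    hG.comp hξto
  have hkne : (-2 * k / 6 : ℝ) ≠ 0 := by
    intro h; apply hk0; linarith
  have hinv : Tendsto (fun c => (G (ξ c) / (ξ c) ^ 3)⁻¹) (𝓝[<] cs)
      (𝓝 ((-2 * k / 6)⁻¹)) := hcomp.inv₀ hkne
  have hval : (-2 * k / 6 : ℝ)⁻¹ = -3 / k := by
    field_simp
    ring
  rw [hval] at hinv
  refine Tendsto.congr' ?_ hinv
  filter_upwards [hmemIoo] with c hc
  have hξc := hξmem c hc
  have hz := hzero c hc
  have hξne : ξ c ≠ 0 := ne_of_gt hξc.1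
  have hccpos : 0 < cs ^ 2 - c ^ 2 := by nlinarith [hc.1, hc.2]
  have hGval : G (ξ c) = (cs ^ 2 - c ^ 2) * (ξ c) ^ 2 := by
    simp only [hGdef]
    linear_combination hz
  rw [hGval]
  field_simp
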